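/- For every integer t ≥ 1, ∫ ∏_{k=1}^t (1 − u_k) dΠ_{c,F0}(u) = F0((t,∞)), and consequently ∫ F_u({t}) dΠ_{c,F0}(u) = F0({t}); that is, the beta-Stacy process BS(c, F0) has mean F0. -/

import Mathlib

open MeasureTheory

/-! # Setup

The (discrete-time) beta-Stacy process `BS(c, F0)` is represented through its
stick-breaking coordinates: `Π_{c,F0}` is the product probability measure on
`[0,1]^{ℕ+}` whose `t`-th coordinate is `Beta(c(t)F0({t}), c(t)F0((t,∞)))`, and for
`u ∈ [0,1]^{ℕ+}` one sets `F_u((t,∞)) = ∏_{k=1}^t (1-u_k)` and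
`F_u({t}) = u_t ∏_{k=1}^{t-1} (1-u_k)`.

The measure `Π` is characterized by its finite-dimensional cylinder values
(hypothesis `hQ` below). -/

/-- The Beta distribution with parameters `a, b > 0`, as a measure on `ℝ`
(supported on `(0,1)`). -/
noncomputable def betaMeasure (a b : ℝ) : Measure ℝ :=
  (volume.restrict (Set.Ioo (0 : ℝ) 1)).withDensity
    (fun x => ENNReal.ofReal
      (Real.Gamma (a + b) / (Real.Gamma a * Real.Gamma b) * x ^ (a - 1) * (1 - x) ^ (b - 1)))

/-- `F0((t,∞)) = ∑_{s > t} F0({s})`. -/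
noncomputable def survF0 (F0 : ℕ+ → ℝ) (t : ℕ) : ℝ :=
  ∑' s : ℕ+, if t < (s : ℕ) then F0 s else 0


-- equality of real and complex kernels on [0,1]
lemma kernel_ofReal {a b : ℝ} {x : ℝ} (h0 : 0 ≤ x) (h1 : x ≤ 1) :
    ((x ^ (a-1) * (1-x) ^ (b-1) : ℝ) : ℂ) =
      (x : ℂ) ^ ((a:ℂ) - 1) * (1 - (x:ℂ)) ^ ((b:ℂ) - 1) := by
  push_cast
  rw [Complex.ofReal_cpow h0, Complex.ofReal_cpow (by linarith)]
  push_cast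
  ring_nf

lemma betaKernelIntegrable {a b : ℝ} (ha : 0 < a) (hb : 0 < b) :
    IntegrableOn (fun x : ℝ => x ^ (a-1) * (1-x) ^ (b-1)) (Set.Ioo 0 1) := by
  have h := (Complex.betaIntegral_convergent (u := a) (v := b) (by simpa) (by simpa)).norm
  have h2 : IntegrableOn (fun x : ℝ => ‖(x : ℂ) ^ ((a:ℂ) - 1) * (1 - (x:ℂ)) ^ ((b:ℂ) - 1)‖)
      (Set.Ioo 0 1) := by
    have := (intervalIntegrable_iff_integrableOn_Ioo_of_le (by norm_num : (0:ℝ) ≤ 1)).mp h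
    simpa using this
  refine h2.congr_fun (fun x hx => ?_) measurableSet_Ioo
  beta_reduce
  rw [← kernel_ofReal hx.1.le hx.2.le, Complex.norm_real, Real.norm_eq_abs, abs_of_nonneg (mul_nonneg (Real.rpow_nonneg hx.1.le _) (Real.rpow_nonneg (by linarith [hx.2]) _))]

lemma betaKernelIntegral {a b : ℝ} (ha : 0 < a) (hb : 0 < b) :
    ∫ x in Set.Ioo (0:ℝ) 1, x ^ (a-1) * (1-x) ^ (b-1) =
      Real.Gamma a * Real.Gamma b / Real.Gamma (a+b) := by
  have key : Complex.Gamma a * Complex.Gamma b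
      = Complex.Gamma (a+b) * Complex.betaIntegral a b :=
    Complex.Gamma_mul_Gamma_eq_betaIntegral (by simpa) (by simpa)
  have hBI : Complex.betaIntegral a b = ((∫ x in (0:ℝ)..1, x ^ (a-1) * (1-x) ^ (b-1) : ℝ) : ℂ) := by
    rw [Complex.betaIntegral, ← intervalIntegral.integral_ofReal]
    refine intervalIntegral.integral_congr fun x hx => ?_
    rw [Set.uIcc_of_le (by norm_num : (0:ℝ) ≤ 1)] at hx
    exact (kernel_ofReal hx.1 hx.2).symm
  have hIoo : (∫ x in (0:ℝ)..1, x ^ (a-1) * (1-x) ^ (b-1)) =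
      ∫ x in Set.Ioo (0:ℝ) 1, x ^ (a-1) * (1-x) ^ (b-1) := by
    rw [intervalIntegral.integral_of_le (by norm_num : (0:ℝ) ≤ 1),
      MeasureTheory.integral_Ioc_eq_integral_Ioo]
  rw [hBI, hIoo] at key
  have hG : ∀ s : ℝ, 0 < s → Complex.Gamma s = ((Real.Gamma s : ℝ) : ℂ) := fun s hs => by
    rw [Complex.Gamma_ofReal]
  rw [hG a ha, hG b hb, ← Complex.ofReal_add, hG (a+b) (by linarith)] at key
  have key2 : Real.Gamma a * Real.Gamma b
      = Real.Gamma (a+b) * ∫ x in Set.Ioo (0:ℝ) 1, x ^ (a-1) * (1-x) ^ (b-1) := by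
    exact_mod_cast key
  have hGne : Real.Gamma (a+b) ≠ 0 := (Real.Gamma_pos_of_pos (by linarith)).ne'
  field_simp at key2 ⊢
  linarith [key2]

lemma betaMeasure_univ {a b : ℝ} (ha : 0 < a) (hb : 0 < b) :
    betaMeasure a b Set.univ = 1 := by
  set C := Real.Gamma (a + b) / (Real.Gamma a * Real.Gamma b) with hC
  have hCpos : 0 < C := div_pos (Real.Gamma_pos_of_pos (by linarith))
    (mul_pos (Real.Gamma_pos_of_pos ha) (Real.Gamma_pos_of_pos hb))
  rw [betaMeasure, withDensity_apply _ MeasurableSet.univ, Measure.restrict_univ]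
  have hInt : IntegrableOn (fun x : ℝ => C * x ^ (a-1) * (1-x) ^ (b-1)) (Set.Ioo 0 1) := by
    have := (betaKernelIntegrable ha hb).const_mul C
    simp only [mul_assoc]
    exact this
  have hnn : 0 ≤ᵐ[volume.restrict (Set.Ioo (0:ℝ) 1)]
      (fun x : ℝ => C * x ^ (a-1) * (1-x) ^ (b-1)) := by
    filter_upwards [ae_restrict_mem measurableSet_Ioo] with x hx
    exact mul_nonneg (mul_nonneg hCpos.le (Real.rpow_nonneg hx.1.le _))
      (Real.rpow_nonneg (by linarith [hx.2]) _)
  rw [← MeasureTheory.ofReal_integral_eq_lintegral_ofReal hInt hnn]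
  have : (∫ x in Set.Ioo (0:ℝ) 1, C * x ^ (a-1) * (1-x) ^ (b-1)) = 1 := by
    simp_rw [mul_assoc]
    rw [MeasureTheory.integral_const_mul, betaKernelIntegral ha hb, hC]
    field_simp
  rw [this, ENNReal.ofReal_one]

lemma isProbability_betaMeasure {a b : ℝ} (ha : 0 < a) (hb : 0 < b) :
    IsProbabilityMeasure (betaMeasure a b) := ⟨betaMeasure_univ ha hb⟩


lemma betaMeasure_integral_eq {a b : ℝ} (g : ℝ → ℝ) :
    ∫ x, g x ∂(betaMeasure a b) = ∫ x in Set.Ioo (0:ℝ) 1,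
      ((Real.Gamma (a + b) / (Real.Gamma a * Real.Gamma b) * x ^ (a - 1) * (1 - x) ^ (b - 1)).toNNReal : ℝ) • g x := by
  have hmeas : Measurable (fun x : ℝ =>
      (Real.Gamma (a + b) / (Real.Gamma a * Real.Gamma b) * x ^ (a - 1) * (1 - x) ^ (b - 1)).toNNReal) := by
    fun_prop
  exact integral_withDensity_eq_integral_smul hmeas g

lemma integral_id_betaMeasure {a b : ℝ} (ha : 0 < a) (hb : 0 < b) :
    ∫ x, x ∂(betaMeasure a b) = a / (a + b) := by
  rw [betaMeasure_integral_eq]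
  have hstep : ∫ x in Set.Ioo (0:ℝ) 1,
      ((Real.Gamma (a + b) / (Real.Gamma a * Real.Gamma b) * x ^ (a - 1) * (1 - x) ^ (b - 1)).toNNReal : ℝ) • x
      = ∫ x in Set.Ioo (0:ℝ) 1,
        Real.Gamma (a + b) / (Real.Gamma a * Real.Gamma b) * (x ^ (a + 1 - 1) * (1 - x) ^ (b - 1)) := by
    refine setIntegral_congr_fun measurableSet_Ioo fun x hx => ?_
    have h0 : (0:ℝ) < x := hx.1
    have h1 : (0:ℝ) < 1 - x := by linarith [hx.2]
    have hnn : 0 ≤ Real.Gamma (a + b) / (Real.Gamma a * Real.Gamma b) * x ^ (a - 1) * (1 - x) ^ (b - 1) := by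
      have := Real.Gamma_pos_of_pos ha
      have := Real.Gamma_pos_of_pos hb
      have := Real.Gamma_pos_of_pos (show (0:ℝ) < a + b by linarith)
      positivity
    rw [smul_eq_mul, Real.coe_toNNReal _ hnn,
      show a + 1 - 1 = (a - 1) + 1 by ring, Real.rpow_add h0, Real.rpow_one]
    ring
  rw [hstep, MeasureTheory.integral_const_mul, betaKernelIntegral (by linarith) hb,
    Real.Gamma_add_one ha.ne', show a + 1 + b = (a + b) + 1 by ring,
    Real.Gamma_add_one (by positivity : (0:ℝ) < a + b).ne']
  have g1 := (Real.Gamma_pos_of_pos ha).ne'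
  have g2 := (Real.Gamma_pos_of_pos hb).ne'
  have g3 := (Real.Gamma_pos_of_pos (show (0:ℝ) < a + b by linarith)).ne'
  have g4 : a + b ≠ 0 := by positivity
  field_simp

lemma integral_one_sub_betaMeasure {a b : ℝ} (ha : 0 < a) (hb : 0 < b) :
    ∫ x, (1 - x) ∂(betaMeasure a b) = b / (a + b) := by
  rw [betaMeasure_integral_eq]
  have hstep : ∫ x in Set.Ioo (0:ℝ) 1,
      ((Real.Gamma (a + b) / (Real.Gamma a * Real.Gamma b) * x ^ (a - 1) * (1 - x) ^ (b - 1)).toNNReal : ℝ) • (1 - x)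
      = ∫ x in Set.Ioo (0:ℝ) 1,
        Real.Gamma (a + b) / (Real.Gamma a * Real.Gamma b) * (x ^ (a - 1) * (1 - x) ^ (b + 1 - 1)) := by
    refine setIntegral_congr_fun measurableSet_Ioo fun x hx => ?_
    have h0 : (0:ℝ) < x := hx.1
    have h1 : (0:ℝ) < 1 - x := by linarith [hx.2]
    have hnn : 0 ≤ Real.Gamma (a + b) / (Real.Gamma a * Real.Gamma b) * x ^ (a - 1) * (1 - x) ^ (b - 1) := by
      have := Real.Gamma_pos_of_pos ha
      have := Real.Gamma_pos_of_pos hb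
      have := Real.Gamma_pos_of_pos (show (0:ℝ) < a + b by linarith)
      positivity
    rw [smul_eq_mul, Real.coe_toNNReal _ hnn,
      show b + 1 - 1 = (b - 1) + 1 by ring, Real.rpow_add h1, Real.rpow_one]
    ring
  rw [hstep, MeasureTheory.integral_const_mul, betaKernelIntegral ha (by linarith),
    Real.Gamma_add_one hb.ne', show a + (b + 1) = (a + b) + 1 by ring,
    Real.Gamma_add_one (by positivity : (0:ℝ) < a + b).ne']
  have g1 := (Real.Gamma_pos_of_pos ha).ne'
  have g2 := (Real.Gamma_pos_of_pos hb).ne'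
  have g3 := (Real.Gamma_pos_of_pos (show (0:ℝ) < a + b by linarith)).ne'
  have g4 : a + b ≠ 0 := by positivity
  field_simp

lemma integral_prod_eq_of_cylinder (β : ℕ+ → Measure ℝ) (hβ : ∀ k, IsProbabilityMeasure (β k))
    (Q : Measure (ℕ+ → ℝ)) [IsProbabilityMeasure Q]
    (hQ : ∀ (J : Finset ℕ+) (B : ℕ+ → Set ℝ), (∀ k, MeasurableSet (B k)) →
      Q {u | ∀ k ∈ J, u k ∈ B k} = ∏ k ∈ J, β k (B k))
    (J : Finset ℕ+) (f : ℕ+ → ℝ → ℝ) (hf : ∀ k, Continuous (f k)) :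
    ∫ u, ∏ k ∈ J, f k (u k) ∂Q = ∏ k ∈ J, ∫ x, f k x ∂(β k) := by
  classical
  haveI : ∀ i : J, IsProbabilityMeasure (β i) := fun i => hβ i
  set φ : (ℕ+ → ℝ) → (J → ℝ) := fun u k => u k with hφdef
  have hφ : Measurable φ := measurable_pi_lambda _ fun k => measurable_pi_apply _
  have hmap : Q.map φ = Measure.pi (fun i : J => β i) := by
    refine (Measure.pi_eq fun s hs => ?_).symm
    rw [Measure.map_apply hφ (MeasurableSet.univ_pi hs)]
    set B : ℕ+ → Set ℝ := fun k => if h : k ∈ J then s ⟨k, h⟩ else Set.univ with hB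
    have hpre : φ ⁻¹' (Set.univ.pi s) = {u | ∀ k ∈ J, u k ∈ B k} := by
      ext u
      simp only [Set.mem_preimage, Set.mem_univ_pi, Set.mem_setOf_eq, hφdef]
      constructor
      · intro h k hk
        simpa [hB, hk] using h ⟨k, hk⟩
      · intro h i
        simpa [hB, i.2] using h i i.2
    have hBm : ∀ k, MeasurableSet (B k) := by
      intro k
      by_cases h : k ∈ J <;> simp [hB, h, hs]
    rw [hpre, hQ J B hBm, ← Finset.prod_coe_sort J (fun k => β k (B k))]
    exact Finset.prod_congr rfl fun i _ => by simp [hB, i.2]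
  have hg : Continuous (fun v : J → ℝ => ∏ i : J, f i (v i)) := by
    exact continuous_finset_prod _ fun i _ => (hf i).comp (continuous_apply i)
  calc ∫ u, ∏ k ∈ J, f k (u k) ∂Q
      = ∫ u, ∏ i : J, f i (φ u i) ∂Q := by
        refine integral_congr_ae (Filter.Eventually.of_forall fun u => ?_)
        exact (Finset.prod_coe_sort J (fun k => f k (u k))).symm
    _ = ∫ v : J → ℝ, ∏ i : J, f i (v i) ∂(Q.map φ) :=
        (integral_map hφ.aemeasurable hg.aestronglyMeasurable).symm
    _ = ∏ i : J, ∫ x, f i x ∂(β i) := by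
        rw [hmap]
        exact MeasureTheory.integral_fintype_prod_eq_prod (𝕜 := ℝ) (ι := J) (E := fun _ => ℝ)
          (fun i => f i) (μ := fun i => β i)
    _ = ∏ k ∈ J, ∫ x, f k x ∂(β k) := Finset.prod_coe_sort J (fun k => ∫ x, f k x ∂(β k))

/-- For every integer `t ≥ 1`,
`∫ ∏_{k=1}^t (1 - u_k) dΠ_{c,F0}(u) = F0((t,∞))`, and consequently
`∫ F_u({t}) dΠ_{c,F0}(u) = F0({t})`: the beta-Stacy process `BS(c, F0)` has mean `F0`. -/
theorem betaStacy_mean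
    (c : ℕ+ → ℝ) (hc : ∀ s, 0 < c s)
    (F0 : ℕ+ → ℝ) (hF0 : ∀ s, 0 < F0 s) (hF0sum : ∑' s, F0 s = 1)
    (Q : Measure (ℕ+ → ℝ)) [IsProbabilityMeasure Q]
    (hQ : ∀ (J : Finset ℕ+) (B : ℕ+ → Set ℝ), (∀ k, MeasurableSet (B k)) →
      Q {u | ∀ k ∈ J, u k ∈ B k} =
        ∏ k ∈ J, betaMeasure (c k * F0 k) (c k * survF0 F0 k) (B k))
    (t : ℕ+) :
    (∫ u, (∏ k ∈ Finset.range (t : ℕ), (1 - u k.succPNat)) ∂Q) = survF0 F0 t ∧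
    (∫ u, (u t * ∏ k ∈ Finset.range ((t : ℕ) - 1), (1 - u k.succPNat)) ∂Q) = F0 t := by
  classical
  -- summability
  have hsum : Summable F0 := by
    by_contra h
    rw [tsum_eq_zero_of_not_summable h] at hF0sum
    norm_num at hF0sum
  set S : ℕ → (ℕ+ → ℝ) := fun n s => if n < (s : ℕ) then F0 s else 0 with hS
  have hSsumm : ∀ n, Summable (S n) := by
    intro n
    have : S n = Set.indicator {s : ℕ+ | n < (s : ℕ)} F0 := by
      funext s
      rw [Set.indicator_apply]
      rfl
    rw [this]
    exact hsum.indicator _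
  have hSnn : ∀ n s, 0 ≤ S n s := by
    intro n s
    simp only [hS]
    split
    · exact (hF0 s).le
    · exact le_rfl
  -- recursion
  have hrec : ∀ n : ℕ, survF0 F0 n = F0 n.succPNat + survF0 F0 (n + 1) := by
    intro n
    have hsplit : ∀ s : ℕ+, S n s = (if s = n.succPNat then F0 n.succPNat else 0) + S (n+1) s := by
      intro s
      by_cases h2 : n + 1 < (s : ℕ)
      · have h1 : n < (s : ℕ) := by omega
        have hne : s ≠ n.succPNat := by
          intro e
          rw [e, Nat.succPNat_coe] at h2
          omega
        simp [hS, h1, h2, hne]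
      · by_cases h1 : n < (s : ℕ)
        · have he : s = n.succPNat := by
            apply PNat.coe_injective
            rw [Nat.succPNat_coe]
            omega
          simp [hS, h1, h2, he]
        · have hne : s ≠ n.succPNat := by
            intro e
            rw [e, Nat.succPNat_coe] at h1
            omega
          simp [hS, h1, h2, hne]
    have hs1 : Summable (fun s : ℕ+ => if s = n.succPNat then F0 n.succPNat else 0) :=
      summable_of_ne_finset_zero (s := {n.succPNat}) (fun b hb => by
        simp only [Finset.mem_singleton] at hb
        simp [hb])
    calc survF0 F0 n = ∑' s, ((if s = n.succPNat then F0 n.succPNat else 0) + S (n+1) s) :=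
          tsum_congr hsplit
      _ = (∑' s : ℕ+, if s = n.succPNat then F0 n.succPNat else 0) + ∑' s, S (n+1) s :=
          hs1.tsum_add (hSsumm (n+1))
      _ = F0 n.succPNat + survF0 F0 (n+1) := by rw [tsum_ite_eq]; rfl
  have hsurv0 : survF0 F0 0 = 1 := by
    have : ∀ s : ℕ+, S 0 s = F0 s := fun s => if_pos s.pos
    calc survF0 F0 0 = ∑' s, F0 s := tsum_congr this
      _ = 1 := hF0sum
  have hsurvpos : ∀ n, 0 < survF0 F0 n := by
    intro n
    refine Summable.tsum_pos (hSsumm n) (hSnn n) n.succPNat ?_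
    rw [if_pos (show n < (n.succPNat : ℕ) by rw [Nat.succPNat_coe]; omega)]
    exact hF0 _
  -- telescoping
  have tel : ∀ n : ℕ, ∏ j ∈ Finset.range n, (survF0 F0 (j+1) / survF0 F0 j) = survF0 F0 n := by
    intro n
    induction n with
    | zero => simp [hsurv0]
    | succ m ih =>
        rw [Finset.prod_range_succ, ih, mul_comm, div_mul_cancel₀ _ (hsurvpos m).ne']
  -- beta measures
  set β : ℕ+ → Measure ℝ := fun k => betaMeasure (c k * F0 k) (c k * survF0 F0 (k : ℕ)) with hβ
  have hapos : ∀ k : ℕ+, 0 < c k * F0 k := fun k => mul_pos (hc k) (hF0 k)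
  have hbpos : ∀ k : ℕ+, 0 < c k * survF0 F0 (k : ℕ) := fun k => mul_pos (hc k) (hsurvpos _)
  have hprob : ∀ k, IsProbabilityMeasure (β k) :=
    fun k => isProbability_betaMeasure (hapos k) (hbpos k)
  have key := integral_prod_eq_of_cylinder β hprob Q hQ
  -- one-coordinate integrals
  have hint1 : ∀ j : ℕ, ∫ x, (1 - x) ∂(β j.succPNat) = survF0 F0 (j+1) / survF0 F0 j := by
    intro j
    have hcoe : (j.succPNat : ℕ) = j + 1 := Nat.succPNat_coe j
    rw [hβ]
    simp only [hcoe]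
    rw [integral_one_sub_betaMeasure (hapos j.succPNat)
      (by rw [hcoe] at *; exact mul_pos (hc _) (hsurvpos (j+1)))]
    rw [← mul_add, ← hrec j, mul_div_mul_left _ _ (hc j.succPNat).ne']
  have ht1 : ((t : ℕ) - 1) + 1 = (t : ℕ) := Nat.succ_pred_eq_of_pos t.pos
  have ht2 : ((t : ℕ) - 1).succPNat = t := by
    apply PNat.coe_injective
    rw [Nat.succPNat_coe]
    omega
  have hFsurv : F0 t + survF0 F0 (t : ℕ) = survF0 F0 ((t : ℕ) - 1) := by
    have := hrec ((t : ℕ) - 1)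
    rw [ht2, ht1] at this
    linarith
  have hint2 : ∫ x, x ∂(β t) = F0 t / survF0 F0 ((t : ℕ) - 1) := by
    rw [hβ]
    simp only
    rw [integral_id_betaMeasure (hapos t) (hbpos t), ← mul_add, hFsurv,
      mul_div_mul_left _ _ (hc t).ne']
  constructor
  · -- part 1
    set J1 : Finset ℕ+ := (Finset.range (t : ℕ)).image Nat.succPNat with hJ1
    have hinj : ∀ a ∈ Finset.range (t : ℕ), ∀ b ∈ Finset.range (t : ℕ),
        Nat.succPNat a = Nat.succPNat b → a = b := fun a _ b _ h => Nat.succPNat_inj.mp h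
    have himg : ∀ u : ℕ+ → ℝ, (∏ k ∈ Finset.range (t : ℕ), (1 - u k.succPNat))
        = ∏ k ∈ J1, (1 - u k) := fun u =>
      (Finset.prod_image (f := fun k => 1 - u k) hinj).symm
    calc (∫ u, (∏ k ∈ Finset.range (t : ℕ), (1 - u k.succPNat)) ∂Q)
        = ∫ u, ∏ k ∈ J1, (fun (_ : ℕ+) (x : ℝ) => 1 - x) k (u k) ∂Q := by
          exact integral_congr_ae (Filter.Eventually.of_forall fun u => himg u)
      _ = ∏ k ∈ J1, ∫ x, (1 - x) ∂(β k) :=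
          key J1 _ (fun k => continuous_const.sub continuous_id)
      _ = ∏ j ∈ Finset.range (t : ℕ), ∫ x, (1 - x) ∂(β j.succPNat) :=
          Finset.prod_image hinj
      _ = ∏ j ∈ Finset.range (t : ℕ), (survF0 F0 (j+1) / survF0 F0 j) :=
          Finset.prod_congr rfl fun j _ => hint1 j
      _ = survF0 F0 (t : ℕ) := tel _
  · -- part 2
    set m : ℕ := (t : ℕ) - 1 with hm
    set J0 : Finset ℕ+ := (Finset.range m).image Nat.succPNat with hJ0
    have htnot : t ∉ J0 := by
      simp only [hJ0, Finset.mem_image, Finset.mem_range]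
      rintro ⟨j, hj, he⟩
      have h2 : (j.succPNat : ℕ) = (t : ℕ) := by rw [he]
      rw [Nat.succPNat_coe] at h2
      omega
    set J2 : Finset ℕ+ := insert t J0 with hJ2
    set f2 : ℕ+ → ℝ → ℝ := fun k x => if k = t then x else 1 - x with hf2
    have hinj : ∀ a ∈ Finset.range m, ∀ b ∈ Finset.range m,
        Nat.succPNat a = Nat.succPNat b → a = b := fun a _ b _ h => Nat.succPNat_inj.mp h
    have hne : ∀ j ∈ Finset.range m, j.succPNat ≠ t := by
      intro j hj he
      exact htnot (he ▸ Finset.mem_image_of_mem _ hj)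
    have hexp : ∀ u : ℕ+ → ℝ, (u t * ∏ k ∈ Finset.range m, (1 - u k.succPNat))
        = ∏ k ∈ J2, f2 k (u k) := by
      intro u
      rw [hJ2, Finset.prod_insert htnot]
      congr 1
      · simp [hf2]
      · rw [hJ0, Finset.prod_image hinj]
        refine Finset.prod_congr rfl fun j hj => ?_
        simp [hf2, hne j hj]
    have hcont : ∀ k, Continuous (f2 k) := by
      intro k
      by_cases h : k = t
      · have he : f2 k = fun x => x := by funext x; simp [hf2, h]
        rw [he]; exact continuous_id
      · have he : f2 k = fun x => 1 - x := by funext x; simp [hf2, h]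
        rw [he]; exact continuous_const.sub continuous_id
    calc (∫ u, (u t * ∏ k ∈ Finset.range m, (1 - u k.succPNat)) ∂Q)
        = ∫ u, ∏ k ∈ J2, f2 k (u k) ∂Q :=
          integral_congr_ae (Filter.Eventually.of_forall fun u => hexp u)
      _ = ∏ k ∈ J2, ∫ x, f2 k x ∂(β k) := key J2 f2 hcont
      _ = (∫ x, x ∂(β t)) * ∏ k ∈ J0, ∫ x, f2 k x ∂(β k) := by
          rw [hJ2, Finset.prod_insert htnot]
          congr 1
          exact integral_congr_ae (Filter.Eventually.of_forall fun x => by simp [hf2])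
      _ = (F0 t / survF0 F0 m) * survF0 F0 m := by
          rw [hint2]
          congr 1
          rw [hJ0, Finset.prod_image hinj, ← tel m]
          refine Finset.prod_congr rfl fun j hj => ?_
          rw [← hint1 j]
          exact integral_congr_ae (Filter.Eventually.of_forall fun x => by
            simp [hf2, hne j hj])
      _ = F0 t := div_mul_cancel₀ _ (hsurvpos m).ne'
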